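/- Let E be a finite directed graph with no sources and m | n with m, n ≥ 1. The adjacency matrices A_m of E(m) and A_n of E(n) are intertwined by the pushforward along p_{n,m} : E^{<n} → E^{<m}, ν ↦ [ν]_m: for every m ∈ ℝ^{E^{<n}}, A_m(p_{n,m}* m) = p_{n,m}*(A_n m), where (p* m)(μ) = Σ_{ν : [ν]_m = μ} m(ν). -/

import Mathlib

/-- A directed graph: vertices, edges, range and source maps. -/
structure DGraph where
  V : Type
  E : Type
  r : E → V
  s : E → V

namespace DGraph

variable {G : DGraph}

/-- A path in a directed graph: a word of composable edges together with a source vertex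
(so that length-zero paths are vertices). -/
structure Path (G : DGraph) where
  src : G.V
  edges : List G.E
  chain : List.Chain' (fun a b => G.s a = G.r b) edges
  srcEq : ∀ a ∈ edges.getLast?, G.s a = src

/-- The range of a path. -/
def Path.rng (p : G.Path) : G.V := p.edges.head?.elim p.src G.r

/-- The length of a path. -/
def Path.length (p : G.Path) : ℕ := p.edges.length

/-- The length-zero path at a vertex. -/
def Path.nil (G : DGraph) (v : G.V) : G.Path :=
  ⟨v, [], List.isChain_nil, by simp⟩

@[simp] theorem Path.length_nil (v : G.V) : (Path.nil G v).length = 0 := rfl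

/-- Prepend an edge to a path. -/
def Path.cons (e : G.E) (p : G.Path) (h : p.rng = G.s e) : G.Path where
  src := p.src
  edges := e :: p.edges
  chain := by
    unfold List.Chain'
    rw [List.isChain_cons]
    refine ⟨fun b hb => ?_, p.chain⟩
    rw [← h]
    simp [Path.rng, Option.mem_def.mp hb]
  srcEq := by
    intro a ha
    cases hp : p.edges with
    | nil =>
      rw [hp] at ha
      simp only [List.getLast?_singleton, Option.mem_def, Option.some.injEq] at ha
      subst ha
      have h0 : p.rng = p.src := by simp [Path.rng, hp]
      rw [← h, h0]
    | cons f t =>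
      apply p.srcEq
      rw [hp]
      rw [hp, List.getLast?_cons_cons] at ha
      exact ha

@[simp] theorem Path.length_cons (e : G.E) (p : G.Path) (h : p.rng = G.s e) :
    (Path.cons e p h).length = p.length + 1 := rfl

/-- Remove the first edge of a path. -/
def Path.tail (p : G.Path) : G.Path where
  src := p.src
  edges := p.edges.tail
  chain := p.chain.tail
  srcEq := by
    intro a ha
    apply p.srcEq
    cases hp : p.edges with
    | nil => rw [hp] at ha; simp at ha
    | cons f t =>
      rw [hp] at ha
      simp only [List.tail_cons] at ha
      cases t with
      | nil => simp at ha
      | cons g u => rw [List.getLast?_cons_cons]; exact ha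

@[simp] theorem Path.length_tail (p : G.Path) : p.tail.length = p.length - 1 := by
  simp [Path.tail, Path.length]

/-- The initial segment of a path consisting of its first `k` edges. -/
def Path.take (p : G.Path) (k : ℕ) : G.Path where
  src := (p.edges.drop k).head?.elim p.src G.r
  edges := p.edges.take k
  chain := p.chain.take k
  srcEq := by
    intro a ha
    have hc : List.Chain' (fun a b => G.s a = G.r b) (p.edges.take k ++ p.edges.drop k) := by
      rw [List.take_append_drop]; exact p.chain
    unfold List.Chain' at hc
    rw [List.isChain_append] at hc
    obtain ⟨-, -, hadj⟩ := hc
    cases hd : p.edges.drop k with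
    | nil =>
      have htake : p.edges.take k = p.edges := by
        have h1 := List.take_append_drop k p.edges
        rw [hd, List.append_nil] at h1
        exact h1
      simp only [List.head?_nil, Option.elim]
      exact p.srcEq a (htake ▸ ha)
    | cons f t =>
      simp only [List.head?_cons, Option.elim]
      exact hadj a ha f (by rw [hd]; simp)

/-- `[μ]_n` : the initial segment of `μ` of length `|μ| mod n`. -/
def Path.trunc (m : ℕ) (p : G.Path) : G.Path := p.take (p.length % m)

/-- Concatenation of paths, `p` followed after `q` (so `p.append q` has range the range of `p`
and source the source of `q`). -/
def Path.append (p q : G.Path) (h : p.src = q.rng) : G.Path where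
  src := q.src
  edges := p.edges ++ q.edges
  chain := by
    unfold List.Chain'
    rw [List.isChain_append]
    refine ⟨p.chain, q.chain, fun a ha b hb => ?_⟩
    rw [p.srcEq a ha, h]
    simp [Path.rng, Option.mem_def.mp hb]
  srcEq := by
    intro a ha
    cases hq : q.edges with
    | nil =>
      rw [hq, List.append_nil] at ha
      have h0 : q.rng = q.src := by simp [Path.rng, hq]
      rw [p.srcEq a ha, h, h0]
    | cons f t =>
      apply q.srcEq
      rw [hq]
      rw [hq, List.getLast?_append_cons] at ha
      exact ha

/-- A graph is row-finite if every vertex receives finitely many edges. -/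
def RowFinite (G : DGraph) : Prop := ∀ v : G.V, {e : G.E | G.r e = v}.Finite

/-- A graph has no sources if every vertex receives an edge. -/
def NoSources (G : DGraph) : Prop := ∀ v : G.V, ∃ e : G.E, G.r e = v

/-- A graph is strongly connected if for all vertices `v, w` there is a path from `w` to `v`. -/
def StronglyConnected (G : DGraph) : Prop :=
  ∀ v w : G.V, ∃ p : G.Path, p.src = w ∧ p.rng = v

/-- The set of paths of length less than `n`. -/
abbrev PathLt (G : DGraph) (n : ℕ) := {p : G.Path // p.length < n}

/-- The graph `E(n)` of Kribs and Solel: vertices are paths of length `< n`, and edges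
are pairs `(e, μ)` with `r(μ) = s(e)` and `|μ| < n`, with source `μ` and range `[eμ]_n`. -/
def Eln (G : DGraph) (n : ℕ) : DGraph where
  V := PathLt G n
  E := {q : G.E × G.Path // q.2.length + 1 ≤ n ∧ q.2.rng = G.s q.1}
  s := fun q => ⟨q.1.2, Nat.lt_of_succ_le q.2.1⟩
  r := fun q =>
    if h : q.1.2.length + 1 < n then
      ⟨Path.cons q.1.1 q.1.2 q.2.2, by simpa using h⟩
    else
      ⟨Path.nil G (G.r q.1.1), Nat.lt_of_lt_of_le (Nat.succ_pos _) q.2.1⟩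

/-- A vertex of `E`, regarded as a length-zero vertex of `E(n)`. -/
def vtx (G : DGraph) (n : ℕ) (hn : 0 < n) (v : G.V) : PathLt G n :=
  ⟨Path.nil G v, by simpa using hn⟩

/-- `d` is the greatest common divisor of the set `S` of natural numbers. -/
def IsGCDOf (d : ℕ) (S : Set ℕ) : Prop :=
  (∀ k ∈ S, d ∣ k) ∧ ∀ c : ℕ, (∀ k ∈ S, c ∣ k) → c ∣ d

/-- The set of lengths of (nonempty) cycles of `G`. -/
def CycleLengths (G : DGraph) : Set ℕ :=
  {k | ∃ p : G.Path, p.rng = p.src ∧ p.edges ≠ [] ∧ p.length = k}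

/-- The set of lengths of (nonempty) cycles of `G` based at `v`. -/
def CycleLengthsAt (G : DGraph) (v : G.V) : Set ℕ :=
  {k | ∃ p : G.Path, p.src = v ∧ p.rng = v ∧ p.edges ≠ [] ∧ p.length = k}

/-- The relation `v ∼ w` iff there is a path from `w` to `v` whose length is divisible by `d`. -/
def SimRel (G : DGraph) (d : ℕ) (v w : G.V) : Prop :=
  ∃ p : G.Path, p.src = w ∧ p.rng = v ∧ d ∣ p.length

/-- The connected-component relation of a graph: the smallest equivalence relation
identifying the range and the source of each edge. -/
def Comp (G : DGraph) : G.V → G.V → Prop :=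
  Relation.EqvGen (fun a b => ∃ f : G.E, G.r f = a ∧ G.s f = b)

/-- The adjacency matrix of `E(n)` acting on vectors indexed by `E^{<n}`. -/
noncomputable def Aact (G : DGraph) (n : ℕ) (g : PathLt G n → ℝ) (v : PathLt G n) : ℝ :=
  ∑ᶠ (f : (Eln G n).E) (_ : (Eln G n).r f = v), g ((Eln G n).s f)

/-- The pushforward of a vector on `E^{<n}` along `ν ↦ [ν]_m`. -/
noncomputable def pushf (G : DGraph) (n m : ℕ) (g : PathLt G n → ℝ) (μ : PathLt G m) : ℝ :=
  ∑ᶠ (ν : PathLt G n) (_ : Path.trunc m ν.1 = μ.1), g ν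

instance : TopologicalSpace G.Path := ⊥

/-- The inverse limit `lim← E^{<n_k}` along the truncation maps. -/
def InvLim (G : DGraph) (n : ℕ → ℕ) : Type :=
  {f : (k : ℕ) → PathLt G (n k) // ∀ k, Path.trunc (n k) (f (k+1)).1 = (f k).1}

instance (G : DGraph) (n : ℕ → ℕ) : TopologicalSpace (InvLim G n) :=
  inferInstanceAs (TopologicalSpace
    {f : (k : ℕ) → PathLt G (n k) // ∀ k, Path.trunc (n k) (f (k+1)).1 = (f k).1})

noncomputable instance (G : DGraph) (n : ℕ → ℕ) : MeasurableSpace (InvLim G n) := borel _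

end DGraph


namespace DGraph

variable {G : DGraph}

theorem Path.ext' {p q : G.Path} (h1 : p.src = q.src) (h2 : p.edges = q.edges) : p = q := by
  cases p; cases q; cases h1; cases h2; rfl

theorem Path.rng_take (p : G.Path) (k : ℕ) : (p.take k).rng = p.rng := by
  rcases p with ⟨src, edges, c, se⟩
  cases edges with
  | nil => cases k <;> simp [Path.rng, Path.take]
  | cons e t => cases k <;> simp [Path.rng, Path.take]

theorem Path.rng_trunc (m : ℕ) (p : G.Path) : (Path.trunc m p).rng = p.rng :=
  Path.rng_take p _

theorem Path.length_take' (p : G.Path) (k : ℕ) : (p.take k).length = min k p.length :=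
  List.length_take ..

theorem Path.length_trunc (m : ℕ) (p : G.Path) :
    (Path.trunc m p).length = p.length % m := by
  rw [Path.trunc, Path.length_take']
  exact min_eq_left (Nat.mod_le _ _)

instance finitePathLt [Finite G.V] [Finite G.E] (n : ℕ) : Finite (PathLt G n) := by
  haveI : Finite (Option G.E) := Finite.of_equiv _ (Equiv.optionEquivSumPUnit.{0,0} G.E).symm
  have hinj : Function.Injective
      (fun p : PathLt G n => (p.1.src, fun i : Fin n => p.1.edges[i.1]?)) := by
    rintro ⟨⟨s1, e1, c1, se1⟩, h1⟩ ⟨⟨s2, e2, c2, se2⟩, h2⟩ h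
    simp only [Prod.mk.injEq] at h
    obtain ⟨hs, he⟩ := h
    refine Subtype.ext (Path.ext' hs ?_)
    apply List.ext_getElem?
    intro i
    show e1[i]? = e2[i]?
    by_cases hi : i < n
    · exact congrFun he ⟨i, hi⟩
    · have hb1 : e1.length ≤ i := by simp only [Path.length] at h1; omega
      have hb2 : e2.length ≤ i := by simp only [Path.length] at h2; omega
      rw [List.getElem?_eq_none hb1, List.getElem?_eq_none hb2]
  exact Finite.of_injective _ hinj

instance finiteElnE [Finite G.V] [Finite G.E] (n : ℕ) : Finite ((Eln G n).E) := by
  have hinj : Function.Injective (fun q : (Eln G n).E =>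
      ((q.1.1, (⟨q.1.2, Nat.lt_of_succ_le q.2.1⟩ : PathLt G n)) : G.E × PathLt G n)) := by
    rintro ⟨⟨e1, p1⟩, h1⟩ ⟨⟨e2, p2⟩, h2⟩ h
    simp only [Prod.mk.injEq, Subtype.mk.injEq] at h
    exact Subtype.ext (Prod.ext h.1 h.2)
  exact Finite.of_injective _ hinj

theorem r_Eln (n : ℕ) (q : (Eln G n).E) :
    ((Eln G n).r q).1 = if h : q.1.2.length + 1 < n then Path.cons q.1.1 q.1.2 q.2.2
      else Path.nil G (G.r q.1.1) := by
  show (dite _ _ _ : PathLt G n).1 = _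
  split <;> rfl

theorem s_Eln (n : ℕ) (q : (Eln G n).E) : ((Eln G n).s q).1 = q.1.2 := rfl

theorem trunc_cons_key (m n : ℕ) (hm : 0 < m) (hdvd : m ∣ n)
    (e : G.E) (ν : G.Path) (h1 : ν.length + 1 ≤ n)
    (h2 : ν.rng = G.s e) (h2' : (Path.trunc m ν).rng = G.s e) :
    (if h : (Path.trunc m ν).length + 1 < m then Path.cons e (Path.trunc m ν) h2'
      else Path.nil G (G.r e))
    = Path.trunc m (if h : ν.length + 1 < n then Path.cons e ν h2
      else Path.nil G (G.r e)) := by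
  by_cases hc1 : ν.length + 1 < n
  · rw [dif_pos hc1]
    by_cases hc2 : (Path.trunc m ν).length + 1 < m
    · rw [dif_pos hc2]
      have hr : ν.length % m + 1 < m := by rwa [Path.length_trunc] at hc2
      have hmod : (ν.length + 1) % m = ν.length % m + 1 := by
        rw [Nat.add_mod]
        have h1m : (1 : ℕ) % m = 1 := Nat.mod_eq_of_lt (by omega)
        rw [h1m, Nat.mod_eq_of_lt hr]
      have hmod' : (ν.edges.length + 1) % m = ν.edges.length % m + 1 := hmod
      apply Path.ext'
      · show (Path.trunc m ν).src = (Path.trunc m (Path.cons e ν h2)).src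
        simp only [Path.trunc, Path.take, Path.cons, Path.length, List.length_cons]
        rw [hmod', List.drop_succ_cons]
      · show e :: (Path.trunc m ν).edges = (Path.trunc m (Path.cons e ν h2)).edges
        simp only [Path.trunc, Path.take, Path.cons, Path.length, List.length_cons]
        rw [hmod', List.take_succ_cons]
    · rw [dif_neg hc2]
      have hlt : ν.length % m < m := Nat.mod_lt _ hm
      have hr : ν.length % m + 1 = m := by
        rw [Path.length_trunc] at hc2; omega
      have hmod : (ν.length + 1) % m = 0 := by
        have hd := Nat.div_add_mod ν.length m
        have he : ν.length + 1 = m * (ν.length / m + 1) := by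
          rw [Nat.mul_add, Nat.mul_one]; omega
        rw [he]; exact Nat.mul_mod_right m _
      have hmod' : (ν.edges.length + 1) % m = 0 := hmod
      apply Path.ext'
      · show G.r e = (Path.trunc m (Path.cons e ν h2)).src
        simp only [Path.trunc, Path.take, Path.cons, Path.length, List.length_cons]
        rw [hmod']
        simp
      · show ([] : List G.E) = (Path.trunc m (Path.cons e ν h2)).edges
        simp only [Path.trunc, Path.take, Path.cons, Path.length, List.length_cons]
        rw [hmod']
        simp
  · rw [dif_neg hc1]
    have hn' : ν.length + 1 = n := by omega
    obtain ⟨k, hk⟩ := hdvd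
    have hr : ν.length % m = m - 1 := by
      cases k with
      | zero => omega
      | succ k' =>
        have hk2 : n = m * k' + m := by rw [hk, Nat.mul_succ]
        have hlen : ν.length = (m - 1) + (m * k') := by omega
        rw [hlen, Nat.mul_comm, Nat.add_mul_mod_self_right]
        exact Nat.mod_eq_of_lt (by omega)
    have hc2 : ¬ ((Path.trunc m ν).length + 1 < m) := by
      rw [Path.length_trunc, hr]; omega
    rw [dif_neg hc2]
    apply Path.ext'
    · show G.r e = (Path.trunc m (Path.nil G (G.r e))).src
      simp [Path.trunc, Path.take, Path.nil, Path.length]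
    · show ([] : List G.E) = (Path.trunc m (Path.nil G (G.r e))).edges
      simp [Path.trunc, Path.take, Path.nil, Path.length]

/-- The map sending an edge `(e, ν)` of `E(n)` to the edge `(e, [ν]_m)` of `E(m)`. -/
def phi (m n : ℕ) (hm : 0 < m) (a : (Eln G n).E) : (Eln G m).E :=
  ⟨(a.1.1, Path.trunc m a.1.2),
    ⟨by rw [Path.length_trunc]; exact Nat.succ_le_of_lt (Nat.mod_lt _ hm),
     by rw [Path.rng_trunc]; exact a.2.2⟩⟩

theorem r_phi (m n : ℕ) (hm : 0 < m) (hdvd : m ∣ n) (a : (Eln G n).E) :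
    ((Eln G m).r (phi m n hm a)).1 = Path.trunc m (((Eln G n).r a).1) := by
  rw [r_Eln, r_Eln]
  exact trunc_cons_key m n hm hdvd a.1.1 a.1.2 a.2.1 a.2.2 _

/-- The map sending an edge `(e, λ)` of `E(m)` together with `ν` with `[ν]_m = λ`
to the edge `(e, ν)` of `E(n)`. -/
def psi (m n : ℕ) (p : (Eln G m).E × PathLt G n)
    (h : Path.trunc m p.2.1 = ((Eln G m).s p.1).1) : (Eln G n).E :=
  ⟨(p.1.1.1, p.2.1), ⟨Nat.succ_le_of_lt p.2.2, by
    rw [← Path.rng_trunc m p.2.1, h]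
    exact p.1.2.2⟩⟩

theorem phi_psi (m n : ℕ) (hm : 0 < m) (p : (Eln G m).E × PathLt G n)
    (h : Path.trunc m p.2.1 = ((Eln G m).s p.1).1) :
    phi m n hm (psi m n p h) = p.1 :=
  Subtype.ext (Prod.ext rfl h)

theorem finsum_cond_eq_sum {α : Type*} [Fintype α] (p : α → Prop) [DecidablePred p]
    (h : α → ℝ) : (∑ᶠ (a) (_ : p a), h a) = ∑ a, if p a then h a else 0 := by
  rw [finsum_eq_sum_of_fintype]
  exact Finset.sum_congr rfl fun a _ => finsum_eq_if

end DGraph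

open DGraph in
/-- Let `E` be a finite directed graph with no sources and `m ∣ n` with
`m, n ≥ 1`.  The adjacency matrices of `E(m)` and `E(n)` are intertwined by the pushforward
along `ν ↦ [ν]_m`: for every vector `g` on `E^{<n}`,
`A_m (p_{n,m}* g) = p_{n,m}* (A_n g)`. -/
theorem Aact_intertwines_pushf (G : DGraph) [Finite G.V] [Finite G.E] (hns : NoSources G)
    (m n : ℕ) (hm : 0 < m) (hn : 0 < n) (hdvd : m ∣ n) (g : PathLt G n → ℝ) :
    ∀ μ : PathLt G m, Aact G m (pushf G n m g) μ = pushf G n m (Aact G n g) μ := by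
  classical
  intro mu
  haveI : Fintype (PathLt G n) := Fintype.ofFinite _
  haveI : Fintype (PathLt G m) := Fintype.ofFinite _
  haveI : Fintype ((Eln G n).E) := Fintype.ofFinite _
  haveI : Fintype ((Eln G m).E) := Fintype.ofFinite _
  have hL : Aact G m (pushf G n m g) mu
      = ∑ f : (Eln G m).E, ∑ ν : PathLt G n,
          if (Eln G m).r f = mu ∧ Path.trunc m ν.1 = ((Eln G m).s f).1 then g ν else 0 := by
    simp only [Aact, pushf]
    rw [finsum_cond_eq_sum]
    refine Finset.sum_congr rfl fun f _ => ?_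
    rw [finsum_cond_eq_sum]
    split_ifs with h
    · exact Finset.sum_congr rfl fun ν _ => if_congr ⟨fun h' => ⟨h, h'⟩, And.right⟩ rfl rfl
    · simp [h]
  have hR : pushf G n m (Aact G n g) mu
      = ∑ f' : (Eln G n).E,
          if Path.trunc m (((Eln G n).r f').1) = mu.1 then g ((Eln G n).s f') else 0 := by
    simp only [pushf, Aact]
    rw [finsum_cond_eq_sum]
    have step1 : ∀ ν' : PathLt G n,
        (if Path.trunc m ν'.1 = mu.1
          then (∑ᶠ (f' : (Eln G n).E) (_ : (Eln G n).r f' = ν'), g ((Eln G n).s f')) else 0)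
        = ∑ f' : (Eln G n).E,
            if ((Eln G n).r f' = ν' ∧ Path.trunc m ν'.1 = mu.1) then g ((Eln G n).s f')
            else 0 := by
      intro ν'
      rw [finsum_cond_eq_sum]
      split_ifs with h
      · exact Finset.sum_congr rfl fun f' _ => by simp [h]
      · simp [h]
    rw [Finset.sum_congr rfl fun ν' _ => step1 ν', Finset.sum_comm]
    refine Finset.sum_congr rfl fun f' _ => ?_
    have := Finset.sum_eq_single (s := (Finset.univ : Finset (PathLt G n)))
      (f := fun ν' => if ((Eln G n).r f' = ν' ∧ Path.trunc m ν'.1 = mu.1)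
        then g ((Eln G n).s f') else 0) ((Eln G n).r f')
      (fun b _ hb => if_neg (by rintro ⟨h1, -⟩; exact hb h1.symm))
      (fun h => absurd (Finset.mem_univ _) h)
    rw [this]
    simp
  rw [hL, hR]
  rw [← Finset.sum_product' Finset.univ Finset.univ
    (fun f ν => if (Eln G m).r f = mu ∧ Path.trunc m ν.1 = ((Eln G m).s f).1 then g ν else 0)]
  rw [Finset.univ_product_univ, ← Finset.sum_filter, ← Finset.sum_filter]
  refine (Finset.sum_bij'
    (i := fun (a : (Eln G n).E) (_ : a ∈ Finset.univ.filter
        (fun a => Path.trunc m (((Eln G n).r a).1) = mu.1)) =>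
      ((phi m n hm a, (Eln G n).s a) : (Eln G m).E × PathLt G n))
    (j := fun p hp => psi m n p (Finset.mem_filter.mp hp).2.2)
    ?_ ?_ ?_ ?_ ?_).symm
  · intro a ha
    rw [Finset.mem_filter] at ha ⊢
    refine ⟨Finset.mem_univ _, Subtype.ext ?_, rfl⟩
    rw [r_phi m n hm hdvd a]
    exact ha.2
  · intro p hp
    rw [Finset.mem_filter]
    refine ⟨Finset.mem_univ _, ?_⟩
    have h2 := (Finset.mem_filter.mp hp).2
    have := r_phi m n hm hdvd (psi m n p h2.2)
    rw [phi_psi m n hm p h2.2] at this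
    rw [← this, h2.1]
  · intro a ha
    exact Subtype.ext rfl
  · intro p hp
    have h2 := (Finset.mem_filter.mp hp).2
    exact Prod.ext (phi_psi m n hm p h2.2) (Subtype.ext rfl)
  · intro a ha
    rfl
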